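/- Let (g,⟨·,·⟩_g) be a finite-dimensional abelian real Lie algebra with a nondegenerate symmetric bilinear form, let A be a skew-symmetric endomorphism of g that is not nilpotent, let δ_A(g) be the double extension of g by A, and let (h,⟨·,·⟩_h) be a finite-dimensional abelian real Lie algebra with a nondegenerate symmetric bilinear form. Consider the direct product Lie algebra δ_A(g) × h with the product bilinear form. Then every skew-symmetric derivation D of δ_A(g) × h satisfies D(e) = 0. In particular, δ_A(g) × h admits no k-symplectic structure for any k ≥ 1. -/

import Mathlib

section DoubleExtension

variable {V H : Type*} [AddCommGroup V] [Module ℝ V] [AddCommGroup H] [Module ℝ H]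

/-- The Lie bracket of the product Lie algebra `δ_A(g) × h`, where `δ_A(g) = ℝe ⊕ g ⊕ ℝē`
is the double extension of the abelian quadratic Lie algebra `(g, Bv)` by the
skew-symmetric endomorphism `A`, and `h` is abelian.  An element `((x, u, x̄), h)`
represents `x e + u + x̄ ē + h`.  The nonvanishing brackets of `δ_A(g)` are
`[ē, u] = A u` and `[u, v] = ⟨A u, v⟩ e`. -/
def deBracket (Bv : V →ₗ[ℝ] V →ₗ[ℝ] ℝ) (A : V →ₗ[ℝ] V)
    (x y : (ℝ × V × ℝ) × H) : (ℝ × V × ℝ) × H :=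
  ((Bv (A x.1.2.1) y.1.2.1, x.1.2.2 • A y.1.2.1 - y.1.2.2 • A x.1.2.1, 0), 0)

/-- The product quadratic form on `δ_A(g) × h`:
`⟨x e + u + x̄ ē + h, y e + v + ȳ ē + k⟩ = x ȳ + y x̄ + ⟨u,v⟩_g + ⟨h,k⟩_h`. -/
def deForm (Bv : V →ₗ[ℝ] V →ₗ[ℝ] ℝ) (Bh : H →ₗ[ℝ] H →ₗ[ℝ] ℝ)
    (x y : (ℝ × V × ℝ) × H) : ℝ :=
  x.1.1 * y.1.2.2 + y.1.1 * x.1.2.2 + Bv x.1.2.1 y.1.2.1 + Bh x.2 y.2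

/-- If `L A - A L = c • A` with `c ≠ 0` then `A` is nilpotent: the nonzero powers of `A`
are eigenvectors of `X ↦ L X - X L` with pairwise distinct eigenvalues. -/
lemma nilp_aux [FiniteDimensional ℝ V] (A L : Module.End ℝ V) {c : ℝ} (hc : c ≠ 0)
    (h : ∀ v, L (A v) = c • A v + A (L v)) : IsNilpotent A := by
  by_contra hA
  have hpow : ∀ k : ℕ, A ^ (k + 1) ≠ 0 := by
    intro k hk
    exact hA ⟨k + 1, hk⟩
  have hLA : L * A - A * L = c • A := by
    ext v
    simp only [LinearMap.sub_apply, Module.End.mul_apply, LinearMap.smul_apply, h v]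
    abel
  set T : Module.End ℝ (Module.End ℝ V) :=
    LinearMap.mulLeft ℝ L - LinearMap.mulRight ℝ L with hT
  have hTapp : ∀ X : Module.End ℝ V, T X = L * X - X * L := by
    intro X; simp [hT, LinearMap.mulLeft_apply, LinearMap.mulRight_apply]
  have key : ∀ k : ℕ, T (A ^ (k + 1)) = (((k : ℝ) + 1) * c) • A ^ (k + 1) := by
    intro k
    induction k with
    | zero => simp [hTapp, pow_one, hLA]
    | succ n ih =>
      rw [hTapp] at ih ⊢
      have : A ^ (n + 1 + 1) = A ^ (n + 1) * A := by rw [pow_succ]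
      rw [this]
      have expand : L * (A ^ (n + 1) * A) - A ^ (n + 1) * A * L
          = (L * A ^ (n + 1) - A ^ (n + 1) * L) * A + A ^ (n + 1) * (L * A - A * L) := by
        noncomm_ring
      rw [expand, ih, hLA]
      push_cast
      rw [smul_mul_assoc, mul_smul_comm]
      module
  have hinj : Function.Injective (fun k : ℕ => ((k : ℝ) + 1) * c) := by
    intro a b hab
    simp only [mul_eq_mul_right_iff, hc, or_false] at hab
    exact_mod_cast add_left_injective 1 hab
  have hli : LinearIndependent ℝ (fun k : ℕ => A ^ (k + 1)) := by
    apply Module.End.eigenvectors_linearIndependent' T (fun k : ℕ => ((k : ℝ) + 1) * c) hinj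
    intro k
    constructor
    · rw [Module.End.mem_eigenspace_iff]; exact key k
    · exact hpow k
  have : Finite ℕ := hli.finite
  exact not_finite ℕ

/-- Part 1: every skew-symmetric derivation of `δ_A(g) × h` kills the central element `e`. -/
lemma killse [FiniteDimensional ℝ V]
    (Bv : V →ₗ[ℝ] V →ₗ[ℝ] ℝ)
    (hBvsymm : ∀ u v : V, Bv u v = Bv v u)
    (hBvnd : ∀ u : V, (∀ v : V, Bv u v = 0) → u = 0)
    (Bh : H →ₗ[ℝ] H →ₗ[ℝ] ℝ)
    (A : V →ₗ[ℝ] V)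
    (hAskew : ∀ u v : V, Bv (A u) v + Bv u (A v) = 0)
    (hAnotnilp : ¬ IsNilpotent A)
    (D : ((ℝ × V × ℝ) × H) →ₗ[ℝ] ((ℝ × V × ℝ) × H))
    (hder : ∀ x y, D (deBracket Bv A x y) =
          deBracket Bv A (D x) y + deBracket Bv A x (D y))
    (hskew : ∀ x y, deForm Bv Bh (D x) y + deForm Bv Bh x (D y) = 0) :
    D ((1, 0, 0), 0) = 0 := by
  rcases hDe : D ((1, 0, 0), (0 : H)) with ⟨⟨a, u₀, e₀⟩, h₀⟩
  rcases hDeb : D ((0, 0, 1), (0 : H)) with ⟨⟨b, w, c⟩, k⟩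
  -- A u₀ = 0
  have hAu0 : A u₀ = 0 := by
    have h1 := hder ((1, 0, 0), (0 : H)) ((0, 0, 1), 0)
    rw [hDe, hDeb] at h1
    have h2 := congrArg (fun z => z.1.2.1) h1
    simp [deBracket, show D ((0, 0, 0), (0 : H)) = 0 from D.map_zero] at h2
    first | exact h2 | exact h2.symm
  -- ψ u = - Bv u u₀
  have hpsi : ∀ u : V, (D ((0, u, 0), (0 : H))).1.2.2 = - Bv u u₀ := by
    intro u
    have h1 := hskew ((0, u, 0), (0 : H)) ((1, 0, 0), 0)
    rw [hDe] at h1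
    simp [deForm] at h1
    linarith
  -- main bracket equations
  have hVeq : ∀ u v : V, Bv (A u) v • u₀ =
      (D ((0, u, 0), (0 : H))).1.2.2 • A v - (D ((0, v, 0), (0 : H))).1.2.2 • A u := by
    intro u v
    have h1 := hder ((0, u, 0), (0 : H)) ((0, v, 0), 0)
    have hsm : deBracket Bv A ((0, u, 0), (0 : H)) ((0, v, 0), 0)
        = Bv (A u) v • ((1, 0, 0), (0 : H)) := by
      simp [deBracket, Prod.smul_mk]
    rw [hsm, map_smul, hDe] at h1
    have h2 := congrArg (fun z => z.1.2.1) h1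
    simpa [deBracket, sub_eq_add_neg] using h2
  have hHeq : ∀ u v : V, Bv (A u) v • h₀ = 0 := by
    intro u v
    have h1 := hder ((0, u, 0), (0 : H)) ((0, v, 0), 0)
    have hsm : deBracket Bv A ((0, u, 0), (0 : H)) ((0, v, 0), 0)
        = Bv (A u) v • ((1, 0, 0), (0 : H)) := by
      simp [deBracket, Prod.smul_mk]
    rw [hsm, map_smul, hDe] at h1
    have h2 := congrArg (fun z => z.2) h1
    simpa [deBracket] using h2
  -- A ≠ 0 gives a nonvanishing Bv (A w0) v0
  obtain ⟨w0, hw0⟩ : ∃ w, A w ≠ 0 := by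
    by_contra hnn
    push_neg at hnn
    exact hAnotnilp ⟨1, by ext v; simp [hnn v]⟩
  obtain ⟨v0, hv0⟩ : ∃ v, Bv (A w0) v ≠ 0 := by
    by_contra hnn
    push_neg at hnn
    exact hw0 (hBvnd _ hnn)
  -- h₀ = 0
  have hh0 : h₀ = 0 := by
    have := hHeq w0 v0
    rcases smul_eq_zero.mp this with h | h
    · exact absurd h hv0
    · exact h
  -- u₀ = 0
  have hBvu0A : ∀ u : V, Bv (A u) u₀ = 0 := by
    intro u
    have h1 := hAskew u₀ u
    rw [hAu0] at h1
    simp at h1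
    rw [hBvsymm]
    exact h1
  have hu0 : u₀ = 0 := by
    by_contra hu
    obtain ⟨v1, hv1⟩ : ∃ v, Bv u₀ v ≠ 0 := by
      by_contra hnn; push_neg at hnn; exact hu (hBvnd _ hnn)
    have hdag : ∀ u v : V, Bv u u₀ • A (A v) = Bv v u₀ • A (A u) := by
      intro u v
      have h1 := congrArg A (hVeq u v)
      rw [map_smul, hAu0, smul_zero, map_sub, map_smul, map_smul, hpsi, hpsi] at h1
      have := sub_eq_zero.mpr h1.symm
      rw [neg_smul, neg_smul, sub_neg_eq_add] at this
      have h2 : Bv v u₀ • A (A u) - Bv u u₀ • A (A v) = 0 := by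
        rw [← this]; abel
      linear_combination (norm := module) - h2
    have hA3 : ∀ u : V, A (A (A u)) = 0 := by
      intro u
      have h1 := hdag (A u) v1
      rw [hBvu0A] at h1
      simp at h1
      rcases smul_eq_zero.mp h1.symm with h | h
      · exact absurd h (by rw [hBvsymm]; exact hv1)
      · exact h
    exact hAnotnilp ⟨3, by ext u; simpa [pow_succ, Module.End.mul_apply] using hA3 u⟩
  -- e₀ = 0
  have he0 : e₀ = 0 := by
    have h1 := hskew ((1, 0, 0), (0 : H)) ((1, 0, 0), 0)
    rw [hDe] at h1
    simp [deForm] at h1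
    linarith
  -- a = 0
  have ha : a = 0 := by
    have hac : a + c = 0 := by
      have h1 := hskew ((1, 0, 0), (0 : H)) ((0, 0, 1), 0)
      rw [hDe, hDeb] at h1
      simp [deForm] at h1
      linarith
    have hc0 : c = 0 := by
      by_contra hc
      set jmap : V →ₗ[ℝ] (ℝ × V × ℝ) × H :=
        (LinearMap.inl ℝ (ℝ × V × ℝ) H).comp
          ((LinearMap.inr ℝ ℝ (V × ℝ)).comp (LinearMap.inl ℝ V ℝ)) with hjm
      set pmap : ((ℝ × V × ℝ) × H) →ₗ[ℝ] V :=
        (LinearMap.fst ℝ V ℝ).comp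
          ((LinearMap.snd ℝ ℝ (V × ℝ)).comp (LinearMap.fst ℝ (ℝ × V × ℝ) H)) with hpm
      set Lm : V →ₗ[ℝ] V := pmap.comp (D.comp jmap) with hLmdef
      have hLm : ∀ v : V, Lm v = (D ((0, v, 0), (0 : H))).1.2.1 := fun v => rfl
      have hrel : ∀ v : V, Lm (A v) = c • A v + A (Lm v) := by
        intro v
        have h1 := hder ((0, 0, 1), (0 : H)) ((0, v, 0), 0)
        rw [hDeb] at h1
        have h2 := congrArg (fun z => z.1.2.1) h1
        simp [deBracket, hLm] at h2 ⊢
        rw [h2]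
      exact hAnotnilp (nilp_aux A Lm hc hrel)
    linarith
  simp [ha, hu0, he0, hh0]

/-- `deForm` as a bilinear map. -/
def bform (Bv : V →ₗ[ℝ] V →ₗ[ℝ] ℝ) (Bh : H →ₗ[ℝ] H →ₗ[ℝ] ℝ) :
    ((ℝ × V × ℝ) × H) →ₗ[ℝ] ((ℝ × V × ℝ) × H) →ₗ[ℝ] ℝ :=
  LinearMap.mk₂ ℝ (deForm Bv Bh)
    (fun x x' y => by simp [deForm, Prod.fst_add, Prod.snd_add]; ring)
    (fun c x y => by simp [deForm, Prod.smul_fst, Prod.smul_snd]; ring)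
    (fun x y y' => by simp [deForm, Prod.fst_add, Prod.snd_add]; ring)
    (fun c x y => by simp [deForm, Prod.smul_fst, Prod.smul_snd]; ring)

lemma bform_apply (Bv : V →ₗ[ℝ] V →ₗ[ℝ] ℝ) (Bh : H →ₗ[ℝ] H →ₗ[ℝ] ℝ) (x y) :
    bform Bv Bh x y = deForm Bv Bh x y := rfl

lemma deForm_symm (Bv : V →ₗ[ℝ] V →ₗ[ℝ] ℝ) (hBvsymm : ∀ u v : V, Bv u v = Bv v u)
    (Bh : H →ₗ[ℝ] H →ₗ[ℝ] ℝ) (hBhsymm : ∀ u v : H, Bh u v = Bh v u) (x y) :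
    deForm Bv Bh x y = deForm Bv Bh y x := by
  simp [deForm, hBvsymm x.1.2.1, hBhsymm x.2]; ring

lemma deForm_nondeg (Bv : V →ₗ[ℝ] V →ₗ[ℝ] ℝ)
    (hBvnd : ∀ u : V, (∀ v : V, Bv u v = 0) → u = 0)
    (Bh : H →ₗ[ℝ] H →ₗ[ℝ] ℝ)
    (hBhnd : ∀ u : H, (∀ v : H, Bh u v = 0) → u = 0)
    (z : (ℝ × V × ℝ) × H) (hz : ∀ y, deForm Bv Bh z y = 0) : z = 0 := by
  have h1 : z.1.1 = 0 := by have := hz ((0, 0, 1), 0); simpa [deForm] using this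
  have h2 : z.1.2.2 = 0 := by have := hz ((1, 0, 0), 0); simpa [deForm] using this
  have h3 : z.1.2.1 = 0 := by
    apply hBvnd
    intro v
    have := hz ((0, v, 0), 0)
    simpa [deForm] using this
  have h4 : z.2 = 0 := by
    apply hBhnd
    intro h
    have := hz ((0, 0, 0), h)
    simpa [deForm] using this
  have : z = ((z.1.1, z.1.2.1, z.1.2.2), z.2) := rfl
  rw [this, h1, h2, h3, h4]
  rfl

lemma deBracket_anti (Bv : V →ₗ[ℝ] V →ₗ[ℝ] ℝ) (hBvsymm : ∀ u v : V, Bv u v = Bv v u)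
    (A : V →ₗ[ℝ] V) (hAskew : ∀ u v : V, Bv (A u) v + Bv u (A v) = 0)
    (x y : (ℝ × V × ℝ) × H) :
    deBracket Bv A x y = - deBracket Bv A y x := by
  have h1 : Bv (A x.1.2.1) y.1.2.1 = - Bv (A y.1.2.1) x.1.2.1 := by
    have := hAskew x.1.2.1 y.1.2.1
    rw [hBvsymm x.1.2.1 (A y.1.2.1)] at this
    linarith
  simp [deBracket, Prod.ext_iff, h1]

lemma deForm_invar (Bv : V →ₗ[ℝ] V →ₗ[ℝ] ℝ) (hBvsymm : ∀ u v : V, Bv u v = Bv v u)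
    (Bh : H →ₗ[ℝ] H →ₗ[ℝ] ℝ)
    (A : V →ₗ[ℝ] V) (hAskew : ∀ u v : V, Bv (A u) v + Bv u (A v) = 0) (x y z) :
    deForm Bv Bh (deBracket Bv A x y) z = deForm Bv Bh x (deBracket Bv A y z) := by
  simp only [deForm, deBracket, map_sub, map_smul, LinearMap.sub_apply, LinearMap.smul_apply,
    smul_eq_mul, map_zero, LinearMap.zero_apply]
  have h1 := hAskew x.1.2.1 z.1.2.1
  have h2 := hAskew x.1.2.1 y.1.2.1
  linear_combination z.1.2.2 * h2 - y.1.2.2 * h1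

/-- Riesz representation with respect to the product form. -/
lemma riesz [FiniteDimensional ℝ V] [FiniteDimensional ℝ H]
    (Bv : V →ₗ[ℝ] V →ₗ[ℝ] ℝ)
    (hBvnd : ∀ u : V, (∀ v : V, Bv u v = 0) → u = 0)
    (Bh : H →ₗ[ℝ] H →ₗ[ℝ] ℝ)
    (hBhnd : ∀ u : H, (∀ v : H, Bh u v = 0) → u = 0)
    (θ : ((ℝ × V × ℝ) × H) →ₗ[ℝ] ((ℝ × V × ℝ) × H) →ₗ[ℝ] ℝ) :
    ∃ D : ((ℝ × V × ℝ) × H) →ₗ[ℝ] ((ℝ × V × ℝ) × H),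
      ∀ x y, deForm Bv Bh (D x) y = θ x y := by
  set Φ : ((ℝ × V × ℝ) × H) →ₗ[ℝ] Module.Dual ℝ ((ℝ × V × ℝ) × H) := bform Bv Bh with hΦ
  have hinj : Function.Injective Φ := by
    rw [← LinearMap.ker_eq_bot, LinearMap.ker_eq_bot']
    intro z hz
    apply deForm_nondeg Bv hBvnd Bh hBhnd
    intro y
    rw [← bform_apply]
    exact congrFun (congrArg DFunLike.coe hz) y
  have hsurj : Function.Surjective Φ :=
    (LinearMap.injective_iff_surjective_of_finrank_eq_finrank
      (Subspace.dual_finrank_eq).symm).mp hinj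
  set eqv := LinearEquiv.ofBijective Φ ⟨hinj, hsurj⟩ with heqv
  refine ⟨(eqv.symm : Module.Dual ℝ ((ℝ × V × ℝ) × H) →ₗ[ℝ] ((ℝ × V × ℝ) × H)).comp θ, ?_⟩
  intro x y
  have h1 : Φ (eqv.symm (θ x)) = θ x := by
    have := eqv.apply_symm_apply (θ x)
    rwa [heqv] at this
  rw [← bform_apply]
  exact congrFun (congrArg DFunLike.coe h1) y

/-- Every derivation of `δ_A(g) × h` (with `g, h` abelian quadratic and `A` skew-symmetric
and not nilpotent) which is skew-symmetric with respect to the product metric kills the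
central element `e`.  In particular `δ_A(g) × h` carries no `k`-symplectic structure for
any `k ≥ 1`. -/
theorem double_extension_no_ksymplectic
    [FiniteDimensional ℝ V] [FiniteDimensional ℝ H]
    (Bv : V →ₗ[ℝ] V →ₗ[ℝ] ℝ)
    (hBvsymm : ∀ u v : V, Bv u v = Bv v u)
    (hBvnd : ∀ u : V, (∀ v : V, Bv u v = 0) → u = 0)
    (Bh : H →ₗ[ℝ] H →ₗ[ℝ] ℝ)
    (hBhsymm : ∀ u v : H, Bh u v = Bh v u)
    (hBhnd : ∀ u : H, (∀ v : H, Bh u v = 0) → u = 0)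
    (A : V →ₗ[ℝ] V)
    (hAskew : ∀ u v : V, Bv (A u) v + Bv u (A v) = 0)
    (hAnotnilp : ¬ IsNilpotent A) :
    (∀ D : ((ℝ × V × ℝ) × H) →ₗ[ℝ] ((ℝ × V × ℝ) × H),
        (∀ x y, D (deBracket Bv A x y) =
          deBracket Bv A (D x) y + deBracket Bv A x (D y)) →
        (∀ x y, deForm Bv Bh (D x) y + deForm Bv Bh x (D y) = 0) →
        D ((1, 0, 0), 0) = 0) ∧
    (∀ (n k : ℕ), 1 ≤ k →
      ∀ (W : Submodule ℝ ((ℝ × V × ℝ) × H)),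
        (∀ x ∈ W, ∀ y ∈ W, deBracket Bv A x y ∈ W) →
        Module.finrank ℝ ((ℝ × V × ℝ) × H) = n * (k + 1) →
        Module.finrank ℝ W = n * k →
        ∀ θ : Fin k → (((ℝ × V × ℝ) × H) →ₗ[ℝ] ((ℝ × V × ℝ) × H) →ₗ[ℝ] ℝ),
          (∀ i, ∀ x, θ i x x = 0) →
          (∀ i, ∀ x y z, θ i (deBracket Bv A x y) z + θ i (deBracket Bv A y z) x +
            θ i (deBracket Bv A z x) y = 0) →
          (∀ x, (∀ i, ∀ y, θ i x y = 0) → x = 0) →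
          (∀ i, ∀ x ∈ W, ∀ y ∈ W, θ i x y = 0) →
          False) := by
  constructor
  · intro D hder hskew
    exact killse Bv hBvsymm hBvnd Bh A hAskew hAnotnilp D hder hskew
  · intro n k hk W hW hr1 hr2 θ halt hcocy hnd hWiso
    -- antisymmetry of each θ i
    have hanti : ∀ i x y, θ i x y = - θ i y x := by
      intro i x y
      have h1 := halt i (x + y)
      simp only [map_add, LinearMap.add_apply, halt i x, halt i y] at h1
      linarith
    -- the central element is in the common kernel of the θ i
    have hker : ∀ i, ∀ y, θ i ((1, 0, 0), (0 : H)) y = 0 := by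
      intro i
      obtain ⟨D, hD⟩ := riesz Bv hBvnd Bh hBhnd (θ i)
      -- D is a derivation
      have hder : ∀ x y, D (deBracket Bv A x y) =
          deBracket Bv A (D x) y + deBracket Bv A x (D y) := by
        intro x y
        have key : ∀ z, deForm Bv Bh
            (D (deBracket Bv A x y) - (deBracket Bv A (D x) y + deBracket Bv A x (D y))) z
            = 0 := by
          intro z
          rw [← bform_apply, map_sub, map_add, LinearMap.sub_apply, LinearMap.add_apply]
          have e1 : bform Bv Bh (D (deBracket Bv A x y)) z = θ i (deBracket Bv A x y) z := by
            rw [bform_apply]; exact hD _ _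
          have e2 : bform Bv Bh (deBracket Bv A (D x) y) z = - θ i (deBracket Bv A y z) x := by
            rw [bform_apply, deForm_invar Bv hBvsymm Bh A hAskew, hD, hanti]
          have e3 : bform Bv Bh (deBracket Bv A x (D y)) z = - θ i (deBracket Bv A z x) y := by
            rw [bform_apply,
              deBracket_anti Bv hBvsymm A hAskew x (D y)]
            have : deForm Bv Bh (-deBracket Bv A (D y) x) z
                = - deForm Bv Bh (deBracket Bv A (D y) x) z := by
              rw [← bform_apply, ← bform_apply, map_neg, LinearMap.neg_apply]
            rw [this, deForm_invar Bv hBvsymm Bh A hAskew, hD]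
            rw [deBracket_anti Bv hBvsymm A hAskew x z, map_neg]
            linarith [hanti i y (deBracket Bv A z x)]
          rw [e1, e2, e3]
          have := hcocy i x y z
          linarith
        have := deForm_nondeg Bv hBvnd Bh hBhnd _ key
        rw [sub_eq_zero] at this
        exact this
      -- D is skew-symmetric
      have hskew : ∀ x y, deForm Bv Bh (D x) y + deForm Bv Bh x (D y) = 0 := by
        intro x y
        rw [hD, deForm_symm Bv hBvsymm Bh hBhsymm x (D y), hD]
        have := hanti i x y
        linarith
      have hDe := killse Bv hBvsymm hBvnd Bh A hAskew hAnotnilp D hder hskew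
      intro y
      rw [← hD, hDe]
      simp [deForm]
    have := hnd _ hker
    have h1 := congrArg (fun z => z.1.1) this
    simpa using h1

end DoubleExtension
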